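/- For m > 1 and 0 < b < 1/2, the integral ∫₀¹ (-log u)/(b+u)^m du is bounded by C · b^{1-m} |log b| for a constant C depending only on m. -/

import Mathlib

open MeasureTheory Real

-- log x ≤ 2 √x for x > 0
lemma aux_log_le {x : ℝ} (hx : 0 < x) : Real.log x ≤ 2 * x ^ ((1:ℝ)/2) := by
  have h1 : Real.log (x ^ ((1:ℝ)/2)) ≤ x ^ ((1:ℝ)/2) - 1 :=
    Real.log_le_sub_one_of_pos (by positivity)
  rw [Real.log_rpow hx] at h1
  linarith

set_option maxHeartbeats 1000000 in
theorem stmt4 (m : ℝ) (hm : 1 < m) :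
    ∃ C : ℝ, 0 < C ∧ ∀ b : ℝ, 0 < b → b < 1/2 →
      ∫ u in Set.Ioo (0:ℝ) 1, (-Real.log u) / (b + u) ^ m ≤
        C * b ^ (1 - m) * |Real.log b| := by
  have hm1 : (0:ℝ) < m - 1 := by linarith
  have hm0 : (0:ℝ) ≤ m := by linarith
  refine ⟨9 + 1/(m-1), by positivity, ?_⟩
  intro b hb hb2
  set g : ℝ → ℝ := fun u => (-Real.log u) / (b + u) ^ m with hgdef
  have hlogb : Real.log b < 0 := Real.log_neg hb (by linarith)
  have habs : |Real.log b| = -Real.log b := abs_of_neg hlogb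
  set L : ℝ := -Real.log b with hLdef
  have hL : (1:ℝ)/2 ≤ L := by
    have h2 : Real.log b < Real.log (1/2) := Real.log_lt_log hb hb2
    have h3 : Real.log (1/2) = -Real.log 2 := by rw [one_div, Real.log_inv]
    have := Real.log_two_gt_d9
    simp only [hLdef]; linarith
  set B : ℝ := b ^ (1 - m) with hBdef
  have hB1 : (1:ℝ) < B := by
    rw [hBdef]
    exact Real.one_lt_rpow_iff_of_pos hb |>.2 (Or.inr ⟨by linarith, by linarith⟩)
  -- the two majorants
  set f1 : ℝ → ℝ := fun u => (L + 2 * b ^ ((1:ℝ)/2) * u ^ (-(1:ℝ)/2)) * b ^ (-m) with hf1def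
  set f2 : ℝ → ℝ := fun u => L * u ^ (-m) with hf2def
  -- continuity of g on Ioi 0
  have hgcont : ContinuousOn g (Set.Ioi (0:ℝ)) := by
    apply ContinuousOn.div
    · exact (Real.continuousOn_log.mono (by intro x hx; exact ne_of_gt hx)).neg
    · exact ((continuous_const.add continuous_id).continuousOn).rpow_const
        (fun x hx => Or.inl (by simp at hx ⊢; linarith))
    · intro x hx
      simp only [Set.mem_Ioi] at hx
      positivity
  -- pointwise bound on (0, b]
  have key1 : ∀ u ∈ Set.Ioc (0:ℝ) b, g u ≤ f1 u := by
    rintro u ⟨hu0, hub⟩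
    have hlu : Real.log u < 0 := Real.log_neg hu0 (by linarith)
    have h1 : g u ≤ (-Real.log u) * b ^ (-m) := by
      rw [Real.rpow_neg hb.le, ← div_eq_mul_inv]
      apply div_le_div_of_nonneg_left (by linarith) (by positivity)
      exact Real.rpow_le_rpow hb.le (by linarith) hm0
    have h2 : -Real.log u ≤ L + 2 * b ^ ((1:ℝ)/2) * u ^ (-(1:ℝ)/2) := by
      have hd : Real.log (b/u) = Real.log b - Real.log u := Real.log_div (ne_of_gt hb) (ne_of_gt hu0)
      have h3 : Real.log (b/u) ≤ 2 * (b/u) ^ ((1:ℝ)/2) := aux_log_le (by positivity)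
      have h4 : (b/u) ^ ((1:ℝ)/2) = b ^ ((1:ℝ)/2) * u ^ (-(1:ℝ)/2) := by
        rw [Real.div_rpow hb.le hu0.le, div_eq_mul_inv, ← Real.rpow_neg hu0.le]
        norm_num
      simp only [hLdef]
      nlinarith [h3, h4, hd]
    calc g u ≤ (-Real.log u) * b ^ (-m) := h1
      _ ≤ f1 u := by
          apply mul_le_mul_of_nonneg_right h2 (by positivity)
  -- pointwise bound on (b, 1]
  have key2 : ∀ u ∈ Set.Ioc b 1, g u ≤ f2 u := by
    rintro u ⟨hbu, hu1⟩
    have hu0 : 0 < u := hb.trans hbu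
    have hlu : -Real.log u ≤ L := by
      simp only [hLdef, neg_le_neg_iff]
      exact Real.log_le_log hb hbu.le
    have hlu0 : 0 ≤ -Real.log u := by
      have := Real.log_nonpos hu0.le hu1
      linarith
    calc g u ≤ (-Real.log u) / u ^ m := by
          apply div_le_div_of_nonneg_left hlu0 (by positivity)
          exact Real.rpow_le_rpow hu0.le (by linarith) hm0
      _ ≤ L / u ^ m := by
          apply div_le_div_of_nonneg_right ?_ (by positivity)
          exact hlu
      _ = f2 u := by
          show L / u ^ m = L * u ^ (-m)
          rw [Real.rpow_neg hu0.le, div_eq_mul_inv]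
  -- integrability of f1 on Ioc 0 b
  have hrint : IntegrableOn (fun u : ℝ => u ^ (-(1:ℝ)/2)) (Set.Ioc 0 b) := by
    have := intervalIntegral.intervalIntegrable_rpow' (a := 0) (b := b)
      (r := -(1:ℝ)/2) (by norm_num)
    rwa [intervalIntegrable_iff_integrableOn_Ioc_of_le hb.le] at this
  have hf1int : IntegrableOn f1 (Set.Ioc 0 b) := by
    apply Integrable.mul_const
    apply Integrable.add
    · exact integrableOn_const measure_Ioc_lt_top.ne
    · exact hrint.const_mul _
  -- integrability of g on Ioc 0 b
  have hgmeas : AEStronglyMeasurable g (volume.restrict (Set.Ioc (0:ℝ) b)) := by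
    apply (hgcont.mono ?_).aestronglyMeasurable measurableSet_Ioc
    intro x hx; exact hx.1
  have hgint1 : IntegrableOn g (Set.Ioc 0 b) := by
    apply Integrable.mono' hf1int hgmeas
    filter_upwards [ae_restrict_mem measurableSet_Ioc] with u hu
    have hg0 : 0 ≤ g u := by
      have hlu : Real.log u < 0 := Real.log_neg hu.1 (by linarith [hu.2])
      have hd : (0:ℝ) < (b + u) ^ m := by
        have : 0 < b + u := by linarith [hu.1]
        positivity
      exact div_nonneg (by linarith) hd.le
    rw [Real.norm_eq_abs, abs_of_nonneg hg0]
    exact key1 u hu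
  -- integrability of g, f2 on Ioc b 1
  have hgint2 : IntegrableOn g (Set.Ioc b 1) := by
    refine ((hgcont.mono ?_).integrableOn_Icc).mono_set Set.Ioc_subset_Icc_self
    intro x hx; exact lt_of_lt_of_le hb hx.1
  have hf2int : IntegrableOn f2 (Set.Ioc b 1) := by
    have hc : ContinuousOn f2 (Set.Icc b 1) := by
      apply ContinuousOn.mul continuousOn_const
      exact continuousOn_id.rpow_const
        (fun x hx => Or.inl (ne_of_gt (lt_of_lt_of_le hb hx.1)))
    exact hc.integrableOn_Icc.mono_set Set.Ioc_subset_Icc_self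
  -- split the integral
  have hsplit : ∫ u in Set.Ioo (0:ℝ) 1, g u = (∫ u in Set.Ioc (0:ℝ) b, g u) + ∫ u in Set.Ioc b 1, g u := by
    rw [← MeasureTheory.integral_Ioc_eq_integral_Ioo,
      ← Set.Ioc_union_Ioc_eq_Ioc hb.le (by linarith : b ≤ 1),
      MeasureTheory.setIntegral_union (Set.Ioc_disjoint_Ioc_of_le le_rfl) measurableSet_Ioc hgint1 hgint2]
  -- compute ∫ f1
  have hrval : ∫ u in Set.Ioc (0:ℝ) b, u ^ (-(1:ℝ)/2) = 2 * b ^ ((1:ℝ)/2) := by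
    rw [← intervalIntegral.integral_of_le hb.le,
      integral_rpow (Or.inl (by norm_num : (-1:ℝ) < -(1:ℝ)/2))]
    rw [Real.zero_rpow (by norm_num : (-(1:ℝ)/2 + 1) ≠ 0)]
    norm_num
    ring
  have hf1val : ∫ u in Set.Ioc (0:ℝ) b, f1 u = (L * b + 4 * b) * b ^ (-m) := by
    simp only [hf1def]
    rw [MeasureTheory.integral_mul_const]
    congr 1
    rw [MeasureTheory.integral_add (integrableOn_const (C := L) measure_Ioc_lt_top.ne) (hrint.const_mul _),
      MeasureTheory.integral_const_mul, hrval, MeasureTheory.setIntegral_const]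
    rw [measureReal_def, Real.volume_Ioc]
    rw [ENNReal.toReal_ofReal (by linarith)]
    have : b ^ ((1:ℝ)/2) * b ^ ((1:ℝ)/2) = b := by
      rw [← Real.rpow_add hb]; norm_num
    simp only [smul_eq_mul]
    nlinarith [this]
  -- compute ∫ f2
  have hf2val : ∫ u in Set.Ioc b 1, f2 u = L * ((1 - B) / (1 - m)) := by
    simp only [hf2def]
    rw [MeasureTheory.integral_const_mul, ← intervalIntegral.integral_of_le (by linarith : b ≤ 1),
      integral_rpow (Or.inr ⟨by intro h; linarith,
        Set.notMem_uIcc_of_lt hb one_pos⟩)]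
    rw [Real.one_rpow]
    rw [hBdef]
    ring_nf
  -- monotonicity
  have hmono1 : ∫ u in Set.Ioc (0:ℝ) b, g u ≤ ∫ u in Set.Ioc (0:ℝ) b, f1 u :=
    MeasureTheory.setIntegral_mono_on hgint1 hf1int measurableSet_Ioc key1
  have hmono2 : ∫ u in Set.Ioc b 1, g u ≤ ∫ u in Set.Ioc b 1, f2 u :=
    MeasureTheory.setIntegral_mono_on hgint2 hf2int measurableSet_Ioc key2
  -- final arithmetic
  have hbB : b * b ^ (-m) = B := by
    rw [hBdef]
    nth_rewrite 1 [← Real.rpow_one b]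
    rw [← Real.rpow_add hb]; ring_nf
  rw [hsplit, habs]
  have e1 : (L * b + 4 * b) * b ^ (-m) = L * B + 4 * B := by
    have := hbB; nlinarith [hbB]
  have e2 : L * ((1 - B) / (1 - m)) ≤ L * B / (m - 1) := by
    have h1 : (1 - B) / (1 - m) = (B - 1) / (m - 1) := by
      rw [div_eq_div_iff (by linarith) (by linarith)]; ring
    rw [h1, mul_div_assoc]
    gcongr <;> linarith
  calc (∫ u in Set.Ioc (0:ℝ) b, g u) + ∫ u in Set.Ioc b 1, g u
      ≤ (∫ u in Set.Ioc (0:ℝ) b, f1 u) + ∫ u in Set.Ioc b 1, f2 u := by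
        exact add_le_add hmono1 hmono2
    _ = (L * B + 4 * B) + L * ((1 - B) / (1 - m)) := by rw [hf1val, hf2val, e1]
    _ ≤ L * B + 8 * B * L + L * B / (m - 1) := by
        have h4 : 4 * B ≤ 8 * B * L := by nlinarith
        clear_value L B
        linarith [e2]
    _ = (9 + 1/(m-1)) * B * L := by
        field_simp
        ring
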